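/- Let T be an M-tableau for a set of M-clauses. If n1 and n2 are distinct nodes of T labelled by M-literals (L1, t1, S1) and (L2, t2, S2) respectively, then the domains of S1 and S2 are disjoint. -/

import Mathlib

namespace MTab

/-- Variables: ordinary variables and abstraction variables. -/
inductive Var : Type
  | ord : ℕ → Var
  | abs : ℕ → Var
  deriving DecidableEq

def Var.isAbs : Var → Prop
  | .abs _ => True
  | .ord _ => False

/-- First-order terms over function symbols `F`. -/
inductive Term (F : Type) : Type
  | var : Var → Term F
  | fn : F → List (Term F) → Term F

/-- Substitutions. -/
abbrev Subst (F : Type) := Var → Term F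

def Term.subst {F : Type} (σ : Subst F) : Term F → Term F
  | .var v => σ v
  | .fn f ts => .fn f (ts.attach.map (fun x => Term.subst σ x.1))
  decreasing_by have := List.sizeOf_lt_of_mem x.2; simp only [Term.fn.sizeOf_spec]; omega

def Term.varList {F : Type} : Term F → List Var
  | .var v => [v]
  | .fn _ ts => (ts.attach.map (fun x => Term.varList x.1)).flatten
  decreasing_by have := List.sizeOf_lt_of_mem x.2; simp only [Term.fn.sizeOf_spec]; omega

def Term.vars {F : Type} (t : Term F) : Set Var := {v | v ∈ t.varList}

def Subst.idS {F : Type} : Subst F := fun v => Term.var v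

def Subst.dom {F : Type} (σ : Subst F) : Set Var := {v | σ v ≠ Term.var v}

def Subst.vars {F : Type} (σ : Subst F) : Set Var :=
  σ.dom ∪ {v | ∃ w ∈ σ.dom, v ∈ Term.vars (σ w)}

/-- Full composition: apply `σ` first, then `τ`. -/
def Subst.comp {F : Type} (σ τ : Subst F) : Subst F := fun v => Term.subst τ (σ v)

open Classical in
/-- Composition of `σ` with `τ`, restricted to the domain of `σ`. -/
noncomputable def Subst.compOn {F : Type} (σ τ : Subst F) : Subst F :=
  fun v => if v ∈ σ.dom then Term.subst τ (σ v) else Term.var v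

def argsVars {F : Type} (args : List (Term F)) : Set Var := {v | ∃ t ∈ args, v ∈ Term.vars t}

/-- Ordinary first-order literals over predicate symbols `P`
(`pol = true` for positive literals). -/
structure Lit (F P : Type) where
  pol : Bool
  pred : P
  args : List (Term F)

def Lit.subst {F P : Type} (σ : Subst F) (l : Lit F P) : Lit F P :=
  ⟨l.pol, l.pred, l.args.map (Term.subst σ)⟩

/-- M-literals: `⊤` or a triple `(L, t, S)`. -/
inductive MLit (F P : Type)
  | top : MLit F P
  | lit (pol : Bool) (pred : P) (args : List (Term F)) (S : Set (Subst F)) : MLit F P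

/-- The (common) domain of the substitution set of an M-literal. -/
def MLit.domS {F P : Type} : MLit F P → Set Var
  | .top => ∅
  | .lit _ _ _ S => {v | ∃ σ ∈ S, v ∈ Subst.dom σ}

/-- Side conditions in the definition of M-literals: all substitutions of `S` share a
common domain `D` consisting of abstraction variables of the argument tuple, and
`Vars(t σ) ∩ D = ∅` for all `σ ∈ S`. -/
def MLit.WF {F P : Type} : MLit F P → Prop
  | .top => True
  | .lit _ _ args S =>
      (∀ σ ∈ S, ∀ τ ∈ S, Subst.dom σ = Subst.dom τ) ∧
      (∀ σ ∈ S, ∀ v ∈ Subst.dom σ, Var.isAbs v ∧ v ∈ argsVars args) ∧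
      (∀ σ ∈ S, ∀ v ∈ Subst.dom σ, v ∉ argsVars (args.map (Term.subst σ)))

def MLit.finiteS {F P : Type} : MLit F P → Prop
  | .top => True
  | .lit _ _ _ S => S.Finite

/-- All variables occurring in an M-literal. -/
def MLit.varsIn {F P : Type} : MLit F P → Set Var
  | .top => ∅
  | .lit _ _ args S => argsVars args ∪ {v | ∃ σ ∈ S, v ∈ Subst.vars σ}

/-- Semantics: `⊤` or a clause, a clause being identified with the set of its
literals (which accounts for associativity, commutativity and idempotence of `∨`). -/
inductive NF (F P : Type)
  | tru : NF F P
  | clause : Set (Lit F P) → NF F P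

def MLit.semSet {F P : Type} : MLit F P → Set (Lit F P)
  | .top => ∅
  | .lit b p args S => {l | ∃ σ ∈ S, l = ⟨b, p, args.map (Term.subst σ)⟩}

def MLit.sem {F P : Type} : MLit F P → NF F P
  | .top => .tru
  | .lit b p args S => .clause (MLit.semSet (.lit b p args S))

/-- M-clauses: sets of M-literals. -/
abbrev MClause (F P : Type) := Set (MLit F P)

open Classical in
noncomputable def MClause.sem {F P : Type} (C : MClause F P) : NF F P :=
  if MLit.top ∈ C then .tru else .clause {l | ∃ m ∈ C, l ∈ MLit.semSet m}

/-- Well-formed M-clauses: distinct M-literals have substitution sets with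
disjoint domains. -/
def MClause.WellFormed {F P : Type} (C : MClause F P) : Prop :=
  ∀ l ∈ C, ∀ m ∈ C, l ≠ m → MLit.domS l ∩ MLit.domS m = ∅

def GoodClauseSet {F P : Type} (𝒞 : Set (MClause F P)) : Prop :=
  ∀ C ∈ 𝒞, MClause.WellFormed C ∧ ∀ l ∈ C, MLit.WF l

def FiniteClauseSet {F P : Type} (𝒞 : Set (MClause F P)) : Prop :=
  ∀ C ∈ 𝒞, C.Finite ∧ ∀ l ∈ C, MLit.finiteS l

open Classical in
/-- Application of a substitution to an M-literal: the arguments are instantiated by the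
restriction of `σ` to the variables not in `dom S`, and the substitutions of `S` are
composed with `σ`. -/
noncomputable def MLit.subst {F P : Type} (σ : Subst F) : MLit F P → MLit F P
  | .top => .top
  | .lit b p args S =>
      .lit b p
        (args.map (Term.subst (fun v => if ∃ θ ∈ S, v ∈ Subst.dom θ then Term.var v else σ v)))
        ((fun θ => Subst.compOn θ σ) '' S)

/-- Renamings: injective, mapping ordinary variables to ordinary variables and
abstraction variables to abstraction variables. -/
def VarRenaming (ρ : Var → Var) : Prop :=
  Function.Injective ρ ∧ (∀ n, ∃ m, ρ (Var.ord n) = Var.ord m) ∧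
    (∀ n, ∃ m, ρ (Var.abs n) = Var.abs m)

def renSubst {F : Type} (ρ : Var → Var) : Subst F := fun v => Term.var (ρ v)

open Classical in
/-- Transport of a substitution along a renaming `ρ`. -/
noncomputable def Subst.renameBy {F : Type} (ρ : Var → Var) (σ : Subst F) : Subst F :=
  fun v => if h : ∃ w, ρ w = v then Term.subst (renSubst ρ) (σ h.choose) else Term.var v

/-- Renaming of an M-literal (all variables, including those of `dom S`, are renamed). -/
noncomputable def MLit.rename {F P : Type} (ρ : Var → Var) : MLit F P → MLit F P
  | .top => .top
  | .lit b p args S => .lit b p (args.map (Term.subst (renSubst ρ))) (Subst.renameBy ρ '' S)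

noncomputable def MClause.rename {F P : Type} (ρ : Var → Var) (C : MClause F P) : MClause F P :=
  MLit.rename ρ '' C

def MLit.head {F P : Type} : MLit F P → Option (Bool × P)
  | .top => none
  | .lit b p _ _ => some (b, p)

/-- Bundled normal form. -/
def MClause.BNF {F P : Type} (C : MClause F P) : Prop :=
  (∀ b p args S, MLit.lit b p args S ∈ C → S ≠ ∅) ∧
  (MLit.top ∈ C → C = {MLit.top}) ∧
  (∀ l ∈ C, ∀ m ∈ C, l ≠ m → MLit.head l ≠ MLit.head m)

end MTab
namespace MTab

/-- Pre-tableaux: trees labelled by M-literals. -/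
inductive Tree (F P : Type)
  | node : MLit F P → List (Tree F P) → Tree F P

def Tree.label {F P : Type} : Tree F P → MLit F P
  | .node l _ => l

def Tree.children {F P : Type} : Tree F P → List (Tree F P)
  | .node _ c => c

/-- The subtree of `t` at position `p` (a position is a list of child indices). -/
def Tree.subtreeAt {F P : Type} : List ℕ → Tree F P → Option (Tree F P)
  | [], t => some t
  | i :: p, .node _ cs => (cs[i]?).bind (Tree.subtreeAt p)

def Tree.labelAt {F P : Type} (p : List ℕ) (t : Tree F P) : Option (MLit F P) :=
  (Tree.subtreeAt p t).map Tree.label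

def Tree.IsPos {F P : Type} (t : Tree F P) (p : List ℕ) : Prop :=
  (Tree.subtreeAt p t).isSome

def Tree.IsLeafPos {F P : Type} (t : Tree F P) (p : List ℕ) : Prop :=
  ∃ l, Tree.subtreeAt p t = some (Tree.node l [])

/-- All variables occurring in the labels of a tree. -/
def Tree.varsIn {F P : Type} (t : Tree F P) : Set Var :=
  {v | ∃ p l, Tree.labelAt p t = some l ∧ v ∈ MLit.varsIn l}

noncomputable def Tree.substT {F P : Type} (σ : Subst F) : Tree F P → Tree F P
  | .node l c => .node (MLit.subst σ l) (c.attach.map (fun x => Tree.substT σ x.1))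
  decreasing_by have := List.sizeOf_lt_of_mem x.2; simp only [Tree.node.sizeOf_spec]; omega

/-- Replace the subtree at position `p` by `u`. -/
def Tree.replaceAt {F P : Type} : List ℕ → Tree F P → Tree F P → Tree F P
  | [], u, _ => u
  | i :: p, u, .node l cs =>
      .node l (match cs[i]? with
        | some tj => cs.set i (Tree.replaceAt p u tj)
        | none => cs)

/-- Change the label of the node at position `p` to `m`. -/
def Tree.relabelAt {F P : Type} : List ℕ → MLit F P → Tree F P → Tree F P
  | [], m, .node _ c => .node m c
  | i :: p, m, .node l cs =>
      .node l (match cs[i]? with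
        | some tj => cs.set i (Tree.relabelAt p m tj)
        | none => cs)

/-- Add a new (last) child `u` to the node at position `p`. -/
def Tree.appendChildAt {F P : Type} : List ℕ → Tree F P → Tree F P → Tree F P
  | [], u, .node l c => .node l (c ++ [u])
  | i :: p, u, .node l cs =>
      .node l (match cs[i]? with
        | some tj => cs.set i (Tree.appendChildAt p u tj)
        | none => cs)

/-- Number of nodes of a tree. -/
def Tree.size {F P : Type} : Tree F P → ℕ
  | .node _ c => 1 + ((c.attach.map (fun x => Tree.size x.1)).sum)
  decreasing_by have := List.sizeOf_lt_of_mem x.2; simp only [Tree.node.sizeOf_spec]; omega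

/-- Number of leaves (branches) of a tree. -/
def Tree.leafCount {F P : Type} : Tree F P → ℕ
  | .node _ [] => 1
  | .node _ (t :: ts) => (((t :: ts).attach.map (fun x => Tree.leafCount x.1)).sum)
  decreasing_by have := List.sizeOf_lt_of_mem x.2; simp only [Tree.node.sizeOf_spec]; omega

/-- Height of a tree (number of nodes on a longest branch). -/
def Tree.height {F P : Type} : Tree F P → ℕ
  | .node _ c => 1 + ((c.attach.map (fun x => Tree.height x.1)).foldr max 0)
  decreasing_by have := List.sizeOf_lt_of_mem x.2; simp only [Tree.node.sizeOf_spec]; omega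

/-- `p` is a proper prefix of `q` (i.e. the node at `q` is a proper descendant
of the node at `p`). -/
def ProperPrefix (p q : List ℕ) : Prop := p <+: q ∧ p ≠ q

def singleSubst {F : Type} (x : Var) (s : Term F) : Subst F :=
  fun v => if v = x then s else Term.var v

/-- The Expansion rule. -/
def ExpandStep {F P : Type} (𝒞 : Set (MClause F P)) (T T' : Tree F P) : Prop :=
  ∃ (p : List ℕ) (l : MLit F P) (C : MClause F P) (ρ : Var → Var) (ls : List (MLit F P)),
    Tree.subtreeAt p T = some (Tree.node l []) ∧
    C ∈ 𝒞 ∧ MLit.top ∉ C ∧ VarRenaming ρ ∧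
    ls.Nodup ∧ {m | m ∈ ls} = MClause.rename ρ C ∧
    (∀ m ∈ ls, MLit.varsIn m ∩ Tree.varsIn T = ∅) ∧
    T' = Tree.replaceAt p (Tree.node l (ls.map (fun m => Tree.node m []))) T

/-- The Instantiation rule: an ordinary variable `x` is instantiated by a term `s`,
provided every node whose label contains `x` is a proper descendant of every node
introducing an abstraction variable of `s`. -/
def InstStep {F P : Type} (T T' : Tree F P) : Prop :=
  ∃ (x : ℕ) (s : Term F),
    (∀ (p p' : List ℕ) (l l' : MLit F P),
        Tree.labelAt p T = some l → Tree.labelAt p' T = some l' →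
        Var.ord x ∈ MLit.varsIn l →
        (∃ α, α ∈ MLit.domS l' ∧ α ∈ Term.vars s ∧ Var.isAbs α) →
        ProperPrefix p' p) ∧
    T' = Tree.substT (singleSubst (Var.ord x) s) T

/-- The Separation rule, applied below the node at position `q`, on its `i`-th child `μ`
labelled `(L, t, S)`, with instantiation `θ` (so that `r = t θ`), splitting `S` into
`S1` (witnessed by the choice function `f` assigning to each `σ ∈ S1` the
corresponding `σ'`) and `S2 = S \ S1`. -/
def SepStep {F P : Type} (T : Tree F P) (q : List ℕ) (i : ℕ)
    (b : Bool) (pr : P) (args : List (Term F)) (S : Set (Subst F))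
    (θ : Subst F) (f : Subst F → Subst F) (S1 S2 : Set (Subst F)) (T' : Tree F P) : Prop :=
  ∃ (n μ : Tree F P),
    Tree.subtreeAt q T = some n ∧ n.children ≠ [] ∧
    (n.children)[i]? = some μ ∧ μ.label = MLit.lit b pr args S ∧
    Subst.dom θ = MLit.domS (MLit.lit b pr args S) ∧
    (∀ α, Var.isAbs α → α ∈ argsVars (args.map (Term.subst θ)) →
      α ∉ MLit.domS (MLit.lit b pr args S)) ∧
    S1 = {σ | σ ∈ S ∧ ∃ σ' : Subst F,
            args.map (Term.subst σ) = (args.map (Term.subst θ)).map (Term.subst σ') ∧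
            ∀ v ∈ Subst.dom σ', Var.isAbs v ∧ v ∉ Tree.varsIn T} ∧
    (∀ σ ∈ S1,
        args.map (Term.subst σ) = (args.map (Term.subst θ)).map (Term.subst (f σ)) ∧
        ∀ v ∈ Subst.dom (f σ), Var.isAbs v ∧ v ∉ Tree.varsIn T) ∧
    S1 ≠ ∅ ∧ S2 = S \ S1 ∧
    T' = Tree.appendChildAt q (Tree.node (MLit.lit b pr args S2) [])
          (Tree.relabelAt (q ++ [i]) (MLit.lit b pr (args.map (Term.subst θ)) (f '' S1))
            (Tree.substT θ T))

/-- M-tableaux for a set of M-clauses. -/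
inductive MTableau {F P : Type} (𝒞 : Set (MClause F P)) : Tree F P → Prop
  | init : MTableau 𝒞 (Tree.node MLit.top [])
  | expand {T T' : Tree F P} : MTableau 𝒞 T → ExpandStep 𝒞 T T' → MTableau 𝒞 T'
  | inst {T T' : Tree F P} : MTableau 𝒞 T → InstStep T T' → MTableau 𝒞 T'
  | sep {T T' : Tree F P} : MTableau 𝒞 T →
      (∃ q i b pr args S θ f S1 S2, SepStep T q i b pr args S θ f S1 S2 T') →
      MTableau 𝒞 T'

/-- `false` literals: M-literals with an empty substitution set. -/
def MLit.isFalse {F P : Type} : MLit F P → Prop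
  | .top => False
  | .lit _ _ _ S => S = ∅

/-- Closedness of the branch ending at leaf position `lp`. -/
def ClosedBranch {F P : Type} (T : Tree F P) (lp : List ℕ) : Prop :=
  (∃ q l, q <+: lp ∧ Tree.labelAt q T = some l ∧ MLit.isFalse l) ∨
  (∃ q1 q2 pr args S1 S2, q1 <+: lp ∧ q2 <+: lp ∧
    Tree.labelAt q1 T = some (MLit.lit true pr args S1) ∧
    Tree.labelAt q2 T = some (MLit.lit false pr args S2))

def ClosedTree {F P : Type} (T : Tree F P) : Prop :=
  ∀ p, Tree.IsLeafPos T p → ClosedBranch T p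

/-- First-order interpretations. -/
structure Interp (F P : Type) where
  carrier : Type
  nonempty : Nonempty carrier
  fI : F → List carrier → carrier
  pI : P → List carrier → Prop

def Term.eval {F P : Type} (I : Interp F P) (ν : Var → I.carrier) : Term F → I.carrier
  | .var v => ν v
  | .fn f ts => I.fI f (ts.attach.map (fun x => Term.eval I ν x.1))
  decreasing_by have := List.sizeOf_lt_of_mem x.2; simp only [Term.fn.sizeOf_spec]; omega

def Lit.holds {F P : Type} (I : Interp F P) (ν : Var → I.carrier) (l : Lit F P) : Prop :=
  if l.pol then I.pI l.pred (l.args.map (Term.eval I ν))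
  else ¬ I.pI l.pred (l.args.map (Term.eval I ν))

/-- Satisfaction of a (universally closed) clause, or of `true`. -/
def Interp.satNF {F P : Type} (I : Interp F P) : NF F P → Prop
  | .tru => True
  | .clause c => ∀ ν : Var → I.carrier, ∃ l ∈ c, Lit.holds I ν l

/-- `⟦𝒞⟧` is unsatisfiable. -/
def Unsat {F P : Type} (𝒞 : Set (MClause F P)) : Prop :=
  ¬ ∃ I : Interp F P, ∀ C ∈ 𝒞, I.satNF (MClause.sem C)

/-- Disjunction of `NF` formulas. -/
def NF.or {F P : Type} : NF F P → NF F P → NF F P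
  | .tru, _ => .tru
  | .clause _, .tru => .tru
  | .clause s, .clause s' => .clause (s ∪ s')

def NF.disj {F P : Type} (l : List (NF F P)) : NF F P := l.foldr NF.or (NF.clause ∅)

/-- Applying a substitution to an `NF` formula (instances of a formula). -/
def NF.substApp {F P : Type} (σ : Subst F) : NF F P → NF F P
  | .tru => .tru
  | .clause s => .clause (Lit.subst σ '' s)

end MTab
namespace MTab

/-! ### Auxiliary lemmas -/

private lemma inter_empty_of_subset {α} {A B A' B' : Set α}
    (h : A ∩ B = ∅) (hA : A' ⊆ A) (hB : B' ⊆ B) : A' ∩ B' = ∅ := by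
  rw [Set.eq_empty_iff_forall_notMem] at h ⊢
  intro v hv; exact h v ⟨hA hv.1, hB hv.2⟩

private lemma inter_empty_of_forall {α} {A B : Set α} (h : ∀ v ∈ A, v ∉ B) : A ∩ B = ∅ := by
  rw [Set.eq_empty_iff_forall_notMem]; intro v hv; exact h v hv.1 hv.2

private lemma inter_empty_symm {α} {A B : Set α} (h : A ∩ B = ∅) : B ∩ A = ∅ := by
  rwa [Set.inter_comm]

lemma dom_compOn {F : Type} (σ τ : Subst F) : (Subst.compOn σ τ).dom ⊆ σ.dom := by
  intro v hv
  by_contra h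
  apply hv
  simp only [Subst.compOn, if_neg h]

lemma domS_subst {F P : Type} (σ : Subst F) (l : MLit F P) :
    (MLit.subst σ l).domS ⊆ l.domS := by
  cases l with
  | top => simp [MLit.subst, MLit.domS]
  | lit b p args S =>
      intro v hv
      simp only [MLit.subst, MLit.domS, Set.mem_setOf_eq] at hv ⊢
      obtain ⟨θ, ⟨θ0, hθ0, rfl⟩, hvd⟩ := hv
      exact ⟨θ0, hθ0, dom_compOn θ0 σ hvd⟩

lemma domS_subset_varsIn {F P : Type} (l : MLit F P) : l.domS ⊆ l.varsIn := by
  cases l with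
  | top => simp [MLit.domS]
  | lit b p args S =>
      intro v hv
      simp only [MLit.domS, Set.mem_setOf_eq] at hv
      obtain ⟨σ, hσ, hvd⟩ := hv
      exact Or.inr ⟨σ, hσ, Or.inl hvd⟩

lemma domS_label_subset {F P : Type} (T : Tree F P) {p : List ℕ} {l : MLit F P}
    (h : Tree.labelAt p T = some l) : l.domS ⊆ T.varsIn :=
  fun v hv => ⟨p, l, h, domS_subset_varsIn l hv⟩

lemma substT_node {F P : Type} (σ : Subst F) (l : MLit F P) (c : List (Tree F P)) :
    Tree.substT σ (Tree.node l c) = Tree.node (MLit.subst σ l) (c.map (Tree.substT σ)) := by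
  rw [Tree.substT, List.attach_map_val]

lemma subtreeAt_substT {F P : Type} (σ : Subst F) : ∀ (p : List ℕ) (T : Tree F P),
    Tree.subtreeAt p (Tree.substT σ T) = (Tree.subtreeAt p T).map (Tree.substT σ)
  | [], T => by simp [Tree.subtreeAt]
  | i :: p, Tree.node l cs => by
      rw [substT_node]
      simp only [Tree.subtreeAt, List.getElem?_map]
      cases h : (cs[i]?) with
      | none => simp
      | some t => simp [subtreeAt_substT σ p t]

lemma label_substT {F P : Type} (σ : Subst F) (T : Tree F P) :
    (Tree.substT σ T).label = MLit.subst σ T.label := by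
  cases T with | node l c => rw [substT_node]; rfl

lemma labelAt_substT {F P : Type} (σ : Subst F) (p : List ℕ) (T : Tree F P) :
    Tree.labelAt p (Tree.substT σ T) = (Tree.labelAt p T).map (MLit.subst σ) := by
  unfold Tree.labelAt
  rw [subtreeAt_substT]
  cases Tree.subtreeAt p T with
  | none => rfl
  | some t => simp [label_substT]

lemma children_substT {F P : Type} (σ : Subst F) (T : Tree F P) :
    (Tree.substT σ T).children.length = T.children.length := by
  cases T with | node l c => rw [substT_node]; simp [Tree.children]

lemma subtreeAt_append {F P : Type} : ∀ (p p' : List ℕ) (T : Tree F P),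
    Tree.subtreeAt (p ++ p') T = (Tree.subtreeAt p T).bind (Tree.subtreeAt p')
  | [], p', T => rfl
  | i :: p, p', Tree.node l cs => by
      simp only [List.cons_append, Tree.subtreeAt]
      cases h : (cs[i]?) with
      | none => rfl
      | some t => exact subtreeAt_append p p' t

lemma labelAt_replaceAt {F P : Type} : ∀ (p0 : List ℕ) (u T : Tree F P),
    (Tree.subtreeAt p0 T).isSome → ∀ q,
    Tree.labelAt q (Tree.replaceAt p0 u T) =
      if p0 <+: q then Tree.labelAt (q.drop p0.length) u else Tree.labelAt q T
  | [], u, T, _, q => by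
      simp [Tree.replaceAt, List.nil_prefix]
  | i :: p, u, Tree.node l cs, h, q => by
      obtain ⟨tj, htj⟩ : ∃ tj, cs[i]? = some tj := by
        simp only [Tree.subtreeAt] at h
        cases hc : (cs[i]?) with
        | none => rw [hc] at h; simp at h
        | some t => exact ⟨t, rfl⟩
      have hst : (Tree.subtreeAt p tj).isSome := by
        simp only [Tree.subtreeAt, htj, Option.bind_some] at h; exact h
      have hlen : i < cs.length := by rcases List.getElem?_eq_some_iff.mp htj with ⟨h', -⟩; exact h'
      simp only [Tree.replaceAt, htj]
      cases q with
      | nil => simp [Tree.labelAt, Tree.subtreeAt, Tree.label, List.prefix_nil]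
      | cons j q' =>
        by_cases hij : i = j
        · subst hij
          have hset : (cs.set i (Tree.replaceAt p u tj))[i]? = some (Tree.replaceAt p u tj) :=
            List.getElem?_set_self hlen
          have e1 : Tree.labelAt (i :: q') (Tree.node l (cs.set i (Tree.replaceAt p u tj)))
              = Tree.labelAt q' (Tree.replaceAt p u tj) := by
            simp [Tree.labelAt, Tree.subtreeAt, hset]
          have e2 : Tree.labelAt (i :: q') (Tree.node l cs) = Tree.labelAt q' tj := by
            simp [Tree.labelAt, Tree.subtreeAt, htj]
          rw [e1, e2, labelAt_replaceAt p u tj hst q']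
          have hiff : (i :: p <+: i :: q') ↔ (p <+: q') := by simp [List.cons_prefix_cons]
          by_cases hp : p <+: q'
          · rw [if_pos hp, if_pos (hiff.mpr hp)]; simp
          · rw [if_neg hp, if_neg (fun hc => hp (hiff.mp hc))]
        · have hset : (cs.set i (Tree.replaceAt p u tj))[j]? = cs[j]? :=
            List.getElem?_set_ne hij
          simp only [Tree.labelAt, Tree.subtreeAt, hset]
          rw [if_neg]
          intro hpre; exact hij (List.cons_prefix_cons.mp hpre).1

lemma labelAt_relabelAt {F P : Type} : ∀ (p0 : List ℕ) (m : MLit F P) (T : Tree F P),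
    (Tree.subtreeAt p0 T).isSome → ∀ q,
    Tree.labelAt q (Tree.relabelAt p0 m T) = if q = p0 then some m else Tree.labelAt q T
  | [], m, Tree.node l c, _, q => by
      cases q with
      | nil => simp [Tree.relabelAt, Tree.labelAt, Tree.subtreeAt, Tree.label]
      | cons j q' => simp [Tree.relabelAt, Tree.labelAt, Tree.subtreeAt]
  | i :: p, m, Tree.node l cs, h, q => by
      obtain ⟨tj, htj⟩ : ∃ tj, cs[i]? = some tj := by
        simp only [Tree.subtreeAt] at h
        cases hc : (cs[i]?) with
        | none => rw [hc] at h; simp at h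
        | some t => exact ⟨t, rfl⟩
      have hst : (Tree.subtreeAt p tj).isSome := by
        simp only [Tree.subtreeAt, htj, Option.bind_some] at h; exact h
      have hlen : i < cs.length := by rcases List.getElem?_eq_some_iff.mp htj with ⟨h', -⟩; exact h'
      simp only [Tree.relabelAt, htj]
      cases q with
      | nil => simp [Tree.labelAt, Tree.subtreeAt, Tree.label]
      | cons j q' =>
        by_cases hij : i = j
        · subst hij
          have hset : (cs.set i (Tree.relabelAt p m tj))[i]? = some (Tree.relabelAt p m tj) :=
            List.getElem?_set_self hlen
          have e1 : Tree.labelAt (i :: q') (Tree.node l (cs.set i (Tree.relabelAt p m tj)))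
              = Tree.labelAt q' (Tree.relabelAt p m tj) := by
            simp [Tree.labelAt, Tree.subtreeAt, hset]
          have e2 : Tree.labelAt (i :: q') (Tree.node l cs) = Tree.labelAt q' tj := by
            simp [Tree.labelAt, Tree.subtreeAt, htj]
          rw [e1, e2, labelAt_relabelAt p m tj hst q']
          by_cases hq : q' = p
          · subst hq; simp
          · rw [if_neg hq, if_neg (fun hc => hq (by simpa using hc))]
        · have hset : (cs.set i (Tree.relabelAt p m tj))[j]? = cs[j]? :=
            List.getElem?_set_ne hij
          simp only [Tree.labelAt, Tree.subtreeAt, hset]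
          rw [if_neg]
          intro hpre; injection hpre with h1 h2; exact hij h1.symm

lemma shape_relabelAt {F P : Type} : ∀ (p0 : List ℕ) (m : MLit F P) (T : Tree F P) (q : List ℕ),
    Option.map (fun t => (Tree.children t).length) (Tree.subtreeAt q (Tree.relabelAt p0 m T)) =
      Option.map (fun t => (Tree.children t).length) (Tree.subtreeAt q T)
  | [], m, Tree.node l c, q => by
      cases q with
      | nil => simp [Tree.relabelAt, Tree.subtreeAt, Tree.children]
      | cons j q' => simp [Tree.relabelAt, Tree.subtreeAt]
  | i :: p, m, Tree.node l cs, q => by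
      simp only [Tree.relabelAt]
      cases htj : (cs[i]?) with
      | none =>
        cases q with
        | nil => rfl
        | cons j q' => rfl
      | some tj =>
        have hlen : i < cs.length := by rcases List.getElem?_eq_some_iff.mp htj with ⟨h', -⟩; exact h'
        cases q with
        | nil => simp [Tree.subtreeAt, Tree.children]
        | cons j q' =>
          by_cases hij : i = j
          · subst hij
            have hset : (cs.set i (Tree.relabelAt p m tj))[i]? = some (Tree.relabelAt p m tj) :=
              List.getElem?_set_self hlen
            simp only [Tree.subtreeAt, hset, htj, Option.bind_some]
            exact shape_relabelAt p m tj q'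
          · have hset : (cs.set i (Tree.relabelAt p m tj))[j]? = cs[j]? :=
              List.getElem?_set_ne hij
            simp only [Tree.subtreeAt, hset]

lemma labelAt_appendChildAt {F P : Type} : ∀ (p0 : List ℕ) (u T n : Tree F P),
    Tree.subtreeAt p0 T = some n → ∀ q,
    Tree.labelAt q (Tree.appendChildAt p0 u T) =
      if (p0 ++ [(Tree.children n).length]) <+: q then Tree.labelAt (q.drop (p0.length + 1)) u
      else Tree.labelAt q T
  | [], u, Tree.node l cs, n, h, q => by
      obtain rfl : Tree.node l cs = n := by simpa [Tree.subtreeAt] using h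
      simp only [Tree.appendChildAt, Tree.children, List.nil_append, List.length_nil]
      cases q with
      | nil => simp [Tree.labelAt, Tree.subtreeAt, Tree.label, List.prefix_nil]
      | cons j q' =>
        have e1 : Tree.labelAt (j :: q') (Tree.node l (cs ++ [u]))
            = ((cs ++ [u])[j]?.bind (Tree.subtreeAt q')).map Tree.label := by
          simp [Tree.labelAt, Tree.subtreeAt]
        have e2 : Tree.labelAt (j :: q') (Tree.node l cs)
            = (cs[j]?.bind (Tree.subtreeAt q')).map Tree.label := by
          simp [Tree.labelAt, Tree.subtreeAt]
        rw [e1, e2, List.getElem?_append]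
        by_cases hj : j < cs.length
        · erw [if_pos hj, if_neg]
          intro hpre
          rcases List.cons_prefix_cons.mp hpre with ⟨rfl, _⟩
          omega
        · by_cases hj2 : j = cs.length
          · subst hj2
            rw [if_neg hj]
            simp only [Nat.sub_self, List.getElem?_cons_zero, Option.bind_some]
            erw [if_pos (by simp [List.cons_prefix_cons])]
            simp [Tree.labelAt, List.drop_succ_cons]
          · rw [if_neg hj]
            have h1 : ([u] : List (Tree F P))[j - cs.length]? = none :=
              List.getElem?_eq_none (by simp; omega)
            have h2 : cs[j]? = none := List.getElem?_eq_none (by omega)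
            rw [h1, h2]; erw [if_neg]
            intro hpre
            rcases List.cons_prefix_cons.mp hpre with ⟨rfl, _⟩
            omega
  | i :: p, u, Tree.node l cs, n, h, q => by
      obtain ⟨tj, htj⟩ : ∃ tj, cs[i]? = some tj := by
        simp only [Tree.subtreeAt] at h
        cases hc : (cs[i]?) with
        | none => rw [hc] at h; simp at h
        | some t => exact ⟨t, rfl⟩
      have hst : Tree.subtreeAt p tj = some n := by
        simp only [Tree.subtreeAt, htj, Option.bind_some] at h; exact h
      have hlen : i < cs.length := by rcases List.getElem?_eq_some_iff.mp htj with ⟨h', -⟩; exact h'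
      simp only [Tree.appendChildAt, htj]
      cases q with
      | nil => simp [Tree.labelAt, Tree.subtreeAt, Tree.label, List.cons_append, List.prefix_nil]
      | cons j q' =>
        by_cases hij : i = j
        · subst hij
          have hset : (cs.set i (Tree.appendChildAt p u tj))[i]? = some (Tree.appendChildAt p u tj) :=
            List.getElem?_set_self hlen
          have e1 : Tree.labelAt (i :: q') (Tree.node l (cs.set i (Tree.appendChildAt p u tj)))
              = Tree.labelAt q' (Tree.appendChildAt p u tj) := by
            simp [Tree.labelAt, Tree.subtreeAt, hset]
          have e2 : Tree.labelAt (i :: q') (Tree.node l cs) = Tree.labelAt q' tj := by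
            simp [Tree.labelAt, Tree.subtreeAt, htj]
          rw [e1, e2, labelAt_appendChildAt p u tj n hst q']
          have hiff : ((i :: p) ++ [(Tree.children n).length] <+: i :: q')
              ↔ ((p ++ [(Tree.children n).length]) <+: q') := by
            simp [List.cons_prefix_cons]
          by_cases hp : (p ++ [(Tree.children n).length]) <+: q'
          · rw [if_pos hp, if_pos (hiff.mpr hp)]
            simp [List.drop_succ_cons]
          · rw [if_neg hp, if_neg (fun hc => hp (hiff.mp hc))]
        · have hset : (cs.set i (Tree.appendChildAt p u tj))[j]? = cs[j]? :=
            List.getElem?_set_ne hij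
          simp only [Tree.labelAt, Tree.subtreeAt, hset]
          rw [if_neg]
          intro hpre
          exact hij (List.cons_prefix_cons.mp hpre).1

lemma subst_var {F : Type} (σ : Subst F) (v : Var) : Term.subst σ (Term.var v) = σ v := by
  simp [Term.subst]

lemma dom_renameBy {F : Type} {ρ : Var → Var} (σ : Subst F) :
    (Subst.renameBy ρ σ).dom ⊆ ρ '' σ.dom := by
  intro v hv
  simp only [Subst.dom, Set.mem_setOf_eq, Subst.renameBy] at hv
  by_cases h : ∃ w, ρ w = v
  · rw [dif_pos h] at hv
    refine ⟨h.choose, ?_, h.choose_spec⟩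
    by_contra hd
    apply hv
    have hσ : σ h.choose = Term.var h.choose := not_not.mp hd
    rw [hσ, subst_var]
    simp [renSubst, h.choose_spec]
  · rw [dif_neg h] at hv; exact absurd rfl hv

lemma domS_rename {F P : Type} {ρ : Var → Var} (l : MLit F P) :
    (MLit.rename ρ l).domS ⊆ ρ '' l.domS := by
  cases l with
  | top => simp [MLit.rename, MLit.domS]
  | lit b p args S =>
    intro v hv
    simp only [MLit.rename, MLit.domS, Set.mem_setOf_eq] at hv
    obtain ⟨σ, ⟨σ0, hσ0, rfl⟩, hvd⟩ := hv
    obtain ⟨w, hw, rfl⟩ := dom_renameBy σ0 hvd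
    exact ⟨w, ⟨σ0, hσ0, hw⟩, rfl⟩

/-- The invariant: labels at distinct positions have disjoint substitution domains. -/
def Inv {F P : Type} (T : Tree F P) : Prop :=
  ∀ p q, p ≠ q → ∀ l1 l2, Tree.labelAt p T = some l1 → Tree.labelAt q T = some l2 →
    MLit.domS l1 ∩ MLit.domS l2 = ∅

lemma mtableau_inv {F P : Type} (𝒞 : Set (MClause F P)) (h𝒞 : GoodClauseSet 𝒞)
    {T : Tree F P} (hT : MTableau 𝒞 T) : Inv T := by
  induction hT with
  | init =>
      intro p q hpq l1 l2 h1 h2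
      have key : ∀ (r : List ℕ) (l : MLit F P),
          Tree.labelAt r (Tree.node (MLit.top : MLit F P) []) = some l → l = MLit.top := by
        intro r l h
        cases r with
        | nil => simpa [Tree.labelAt, Tree.subtreeAt, Tree.label] using h.symm
        | cons j r' => simp [Tree.labelAt, Tree.subtreeAt] at h
      rw [key p l1 h1]
      simp [MLit.domS]
  | expand hTprev hstep ih =>
      obtain ⟨p0, l, C, ρ, ls, hleaf, hC, htop, hρ, hnodup, hsetls, hfresh, rfl⟩ := hstep
      rename_i T
      set u : Tree F P := Tree.node l (ls.map (fun m => Tree.node m [])) with hu_def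
      have hsub : (Tree.subtreeAt p0 T).isSome := by rw [hleaf]; rfl
      have hl0 : Tree.labelAt p0 T = some l := by
        simp [Tree.labelAt, hleaf, Tree.label]
      -- labels of u
      have hu : ∀ (r : List ℕ) (m' : MLit F P), Tree.labelAt r u = some m' →
          (r = [] ∧ m' = l) ∨ (∃ j, r = [j] ∧ ls[j]? = some m') := by
        intro r m' h
        cases r with
        | nil =>
            left
            refine ⟨rfl, ?_⟩
            simpa [hu_def, Tree.labelAt, Tree.subtreeAt, Tree.label] using h.symm
        | cons j r' =>
          cases r' with
          | nil =>
              right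
              refine ⟨j, rfl, ?_⟩
              simp only [hu_def, Tree.labelAt, Tree.subtreeAt, List.getElem?_map] at h
              cases hj : (ls[j]?) with
              | none => rw [hj] at h; simp at h
              | some m0 =>
                  rw [hj] at h
                  simp [Tree.subtreeAt, Tree.label] at h
                  simp [h]
          | cons k r'' =>
              exfalso
              simp only [hu_def, Tree.labelAt, Tree.subtreeAt, List.getElem?_map] at h
              cases hj : (ls[j]?) with
              | none => rw [hj] at h; simp at h
              | some m0 =>
                  rw [hj] at h
                  simp [Tree.subtreeAt] at h
      -- members of ls
      have hmem : ∀ m ∈ ls, ∃ c ∈ C, m = MLit.rename ρ c := by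
        intro m hm
        have : m ∈ MClause.rename ρ C := by
          rw [← hsetls]; exact hm
        obtain ⟨c, hc, rfl⟩ := this
        exact ⟨c, hc, rfl⟩
      have hfreshdom : ∀ m ∈ ls, ∀ (l2 : MLit F P) (q : List ℕ),
          Tree.labelAt q T = some l2 → MLit.domS m ∩ MLit.domS l2 = ∅ := by
        intro m hm l2 q hq
        exact inter_empty_of_subset (hfresh m hm) (domS_subset_varsIn m)
          (domS_label_subset T hq)
      -- distinct members of ls have disjoint domains
      have hpair : ∀ (j k : ℕ) (m1 m2 : MLit F P), j ≠ k → ls[j]? = some m1 → ls[k]? = some m2 →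
          MLit.domS m1 ∩ MLit.domS m2 = ∅ := by
        intro j k m1 m2 hjk hj hk
        obtain ⟨hjl, hjv⟩ := List.getElem?_eq_some_iff.mp hj
        obtain ⟨hkl, hkv⟩ := List.getElem?_eq_some_iff.mp hk
        have hne : m1 ≠ m2 := by
          intro he
          exact hjk ((hnodup.getElem_inj_iff).mp (by rw [hjv, hkv]; exact he))
        obtain ⟨c1, hc1, rfl⟩ := hmem m1 (List.mem_of_getElem? hj)
        obtain ⟨c2, hc2, rfl⟩ := hmem m2 (List.mem_of_getElem? hk)
        have hcne : c1 ≠ c2 := fun he => hne (by rw [he])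
        have hdisj : MLit.domS c1 ∩ MLit.domS c2 = ∅ :=
          (h𝒞 C hC).1 c1 hc1 c2 hc2 hcne
        refine inter_empty_of_subset ?_ (domS_rename c1) (domS_rename c2)
        rw [← Set.image_inter hρ.1, hdisj, Set.image_empty]
      intro p q hpq l1 l2 h1 h2
      rw [labelAt_replaceAt p0 u T hsub] at h1 h2
      by_cases hp : p0 <+: p <;> by_cases hq : p0 <+: q
      · rw [if_pos hp] at h1
        rw [if_pos hq] at h2
        obtain ⟨r1, rfl⟩ := hp
        obtain ⟨r2, rfl⟩ := hq
        rw [List.drop_left] at h1 h2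
        rcases hu r1 l1 h1 with ⟨rfl, rfl⟩ | ⟨j, rfl, hj⟩ <;>
          rcases hu r2 l2 h2 with ⟨rfl, rfl⟩ | ⟨k, rfl, hk⟩
        · exact absurd rfl hpq
        · exact inter_empty_symm (hfreshdom l2 (List.mem_of_getElem? hk) l1 (p0 ++ []) (by simpa using hl0))
        · exact hfreshdom l1 (List.mem_of_getElem? hj) l2 (p0 ++ []) (by simpa using hl0)
        · have hjk : j ≠ k := by
            intro he; exact hpq (by rw [he])
          exact hpair j k l1 l2 hjk hj hk
      · rw [if_pos hp] at h1
        rw [if_neg hq] at h2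
        obtain ⟨r1, rfl⟩ := hp
        rw [List.drop_left] at h1
        rcases hu r1 l1 h1 with ⟨rfl, rfl⟩ | ⟨j, rfl, hj⟩
        · have : p0 ++ ([] : List ℕ) ≠ q := by
            intro he; exact hq (he ▸ ⟨[], rfl⟩)
          exact ih (p0 ++ []) q this l1 l2 (by simpa using hl0) h2
        · exact hfreshdom l1 (List.mem_of_getElem? hj) l2 q h2
      · rw [if_neg hp] at h1
        rw [if_pos hq] at h2
        obtain ⟨r2, rfl⟩ := hq
        rw [List.drop_left] at h2
        rcases hu r2 l2 h2 with ⟨rfl, rfl⟩ | ⟨j, rfl, hj⟩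
        · have : p ≠ p0 ++ ([] : List ℕ) := by
            intro he; exact hp (he ▸ ⟨[], rfl⟩)
          exact ih p (p0 ++ []) this l1 l2 h1 (by simpa using hl0)
        · exact inter_empty_symm (hfreshdom l2 (List.mem_of_getElem? hj) l1 p h1)
      · rw [if_neg hp] at h1
        rw [if_neg hq] at h2
        exact ih p q hpq l1 l2 h1 h2
  | inst hTprev hstep ih =>
      obtain ⟨x, s, hcond, rfl⟩ := hstep
      intro p q hpq l1 l2 h1 h2
      rw [labelAt_substT] at h1 h2
      obtain ⟨m1, hm1, rfl⟩ := Option.map_eq_some_iff.mp h1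
      obtain ⟨m2, hm2, rfl⟩ := Option.map_eq_some_iff.mp h2
      exact inter_empty_of_subset (ih p q hpq m1 m2 hm1 hm2)
        (domS_subst _ m1) (domS_subst _ m2)
  | sep hTprev hstep ih =>
      obtain ⟨q0, i, b, pr, args, S, θ, f, S1, S2, hsep⟩ := hstep
      obtain ⟨n, μ, hq0, hne, hi, hμl, hdomθ, habs, hS1, hf, hS1ne, hS2, rfl⟩ := hsep
      rename_i T
      -- position q0 ++ [i] in T carries the separated literal
      have hμ : Tree.subtreeAt (q0 ++ [i]) T = some μ := by
        rw [subtreeAt_append, hq0, Option.bind_some]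
        cases n with
        | node ln cn =>
            simp only [Tree.children] at hi
            simp [Tree.subtreeAt, hi]
      have hlab : Tree.labelAt (q0 ++ [i]) T = some (MLit.lit b pr args S) := by
        simp [Tree.labelAt, hμ, hμl]
      set T1 := Tree.substT θ T with hT1
      set m1 := MLit.lit b pr (args.map (Term.subst θ)) (f '' S1) with hm1
      set T2 := Tree.relabelAt (q0 ++ [i]) m1 T1 with hT2
      set child : Tree F P := Tree.node (MLit.lit b pr args S2) [] with hchild
      have hμ1 : Tree.subtreeAt (q0 ++ [i]) T1 = some (Tree.substT θ μ) := by
        rw [hT1, subtreeAt_substT, hμ]; rfl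
      have hμ1s : (Tree.subtreeAt (q0 ++ [i]) T1).isSome := by rw [hμ1]; rfl
      -- subtree at q0 in T2
      have hshape : Option.map (fun t => (Tree.children t).length) (Tree.subtreeAt q0 T2)
          = some (Tree.children n).length := by
        rw [hT2, shape_relabelAt, hT1, subtreeAt_substT, hq0]
        simp [children_substT]
      obtain ⟨n2, hn2, hn2len⟩ : ∃ n2, Tree.subtreeAt q0 T2 = some n2 ∧
          (Tree.children n2).length = (Tree.children n).length := by
        cases hx : (Tree.subtreeAt q0 T2) with
        | none => rw [hx] at hshape; simp at hshape
        | some t => rw [hx] at hshape; exact ⟨t, rfl, by simpa using hshape⟩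
      -- domS bounds for the new literals
      have hS2dom : MLit.domS (MLit.lit b pr args S2) ⊆ MLit.domS (MLit.lit b pr args S) := by
        intro v hv
        obtain ⟨σ, hσ, hvd⟩ := hv
        exact ⟨σ, (hS2 ▸ hσ).1, hvd⟩
      have hm1dom : ∀ v ∈ MLit.domS m1, v ∉ Tree.varsIn T := by
        intro v hv
        obtain ⟨σ', ⟨σ0, hσ0, rfl⟩, hvd⟩ := hv
        exact ((hf σ0 hσ0).2 v hvd).2
      -- classification of labels of T'
      have hclass : ∀ (r : List ℕ) (lr : MLit F P),
          Tree.labelAt r (Tree.appendChildAt q0 child T2) = some lr →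
          (r = q0 ++ [(Tree.children n2).length] ∧ lr = MLit.lit b pr args S2) ∨
          (r = q0 ++ [i] ∧ lr = m1) ∨
          (r ≠ q0 ++ [i] ∧ ¬ (q0 ++ [(Tree.children n2).length] <+: r) ∧
            ∃ lold, Tree.labelAt r T = some lold ∧ lr = MLit.subst θ lold) := by
        intro r lr h
        rw [labelAt_appendChildAt q0 child T2 n2 hn2 r] at h
        by_cases hpre : q0 ++ [(Tree.children n2).length] <+: r
        · rw [if_pos hpre] at h
          obtain ⟨rest, rfl⟩ := hpre
          left
          have hdrop : ((q0 ++ [(Tree.children n2).length]) ++ rest).drop (q0.length + 1) = rest := by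
            have : (q0 ++ [(Tree.children n2).length]).length = q0.length + 1 := by simp
            rw [← this, List.drop_left]
          rw [hdrop] at h
          cases rest with
          | nil =>
              refine ⟨by simp, ?_⟩
              simpa [hchild, Tree.labelAt, Tree.subtreeAt, Tree.label] using h.symm
          | cons a rest' =>
              exfalso
              simp [hchild, Tree.labelAt, Tree.subtreeAt] at h
        · rw [if_neg hpre] at h
          rw [hT2, labelAt_relabelAt (q0 ++ [i]) m1 T1 hμ1s r] at h
          by_cases hri : r = q0 ++ [i]
          · rw [if_pos hri] at h
            right; left
            exact ⟨hri, (Option.some.inj h).symm⟩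
          · rw [if_neg hri] at h
            right; right
            refine ⟨hri, hpre, ?_⟩
            rw [hT1, labelAt_substT] at h
            obtain ⟨lold, hlold, rfl⟩ := Option.map_eq_some_iff.mp h
            exact ⟨lold, hlold, rfl⟩
      intro p q hpq l1 l2 h1 h2
      rcases hclass p l1 h1 with ⟨rfl, rfl⟩ | ⟨rfl, rfl⟩ | ⟨hp1, hp2, lold1, hold1, rfl⟩ <;>
        rcases hclass q l2 h2 with ⟨hq1, rfl⟩ | ⟨hq1, rfl⟩ | ⟨hq1, hq2, lold2, hold2, rfl⟩
      · exact absurd hq1.symm hpq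
      · -- S2 vs m1
        subst hq1
        exact inter_empty_symm (inter_empty_of_forall (fun v hv =>
          fun hv2 => hm1dom v hv (domS_label_subset T hlab (hS2dom hv2))))
      · -- S2 vs old
        refine inter_empty_of_subset (ih (q0 ++ [i]) q ?_ _ _ hlab hold2) hS2dom (domS_subst θ lold2)
        exact fun he => hq1 he.symm
      · -- m1 vs S2
        subst hq1
        exact inter_empty_of_forall (fun v hv =>
          fun hv2 => hm1dom v hv (domS_label_subset T hlab (hS2dom hv2)))
      · exact absurd hq1.symm hpq
      · -- m1 vs old
        exact inter_empty_of_forall (fun v hv => fun hv2 =>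
          hm1dom v hv (domS_label_subset T hold2 (domS_subst θ lold2 hv2)))
      · -- old vs S2
        subst hq1
        exact inter_empty_of_subset (ih p (q0 ++ [i]) hp1 _ _ hold1 hlab)
          (domS_subst θ lold1) hS2dom
      · -- old vs m1
        subst hq1
        exact inter_empty_symm (inter_empty_of_forall (fun v hv => fun hv2 =>
          hm1dom v hv (domS_label_subset T hold1 (domS_subst θ lold1 hv2))))
      · exact inter_empty_of_subset (ih p q hpq lold1 lold2 hold1 hold2)
          (domS_subst θ lold1) (domS_subst θ lold2)

/-- in an M-tableau for a set of (well-formed) M-clauses, the substitution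
sets of the M-literals labelling two distinct nodes have disjoint domains. -/
theorem mtableau_disjoint_domains {F P : Type} (𝒞 : Set (MClause F P))
    (h𝒞 : GoodClauseSet 𝒞) (T : Tree F P) (hT : MTableau 𝒞 T)
    (p q : List ℕ) (hpq : p ≠ q)
    (b1 : Bool) (pr1 : P) (a1 : List (Term F)) (S1 : Set (Subst F))
    (b2 : Bool) (pr2 : P) (a2 : List (Term F)) (S2 : Set (Subst F))
    (h1 : Tree.labelAt p T = some (MLit.lit b1 pr1 a1 S1))
    (h2 : Tree.labelAt q T = some (MLit.lit b2 pr2 a2 S2)) :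
    MLit.domS (MLit.lit b1 pr1 a1 S1) ∩ MLit.domS (MLit.lit b2 pr2 a2 S2) = ∅ := by
  exact mtableau_inv 𝒞 h𝒞 hT p q hpq _ _ h1 h2

end MTab
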